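/- Let v = (1,0,−m) in the Mukai lattice of a K3 surface, m ≥ 1, and w = (1,0,m). If g is an isometry of v^⊥ (extended to the Mukai lattice fixing v) with g(w) = (r, kL, rm) for an integer r, integer k and primitive class L ∈ H^2(S,Z), then 2m divides both k and r−1; writing k = 2mc and r−1 = 2mρ, the equation c²(L·L) = 2ρ + 2mρ² holds, and gcd(c, r) = 1. -/

import Mathlib

/-- The Mukai pairing on `ℤ ⊕ M ⊕ ℤ`. -/
def mukaiForm {R : Type} [CommRing R] {M : Type} [AddCommGroup M] [Module R M]
    (B : M →ₗ[R] M →ₗ[R] R) : (R × M × R) →ₗ[R] (R × M × R) →ₗ[R] R :=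
  LinearMap.mk₂ R (fun x y => B x.2.1 y.2.1 - x.1 * y.2.2 - y.1 * x.2.2)
    (fun x x' y => by simp [add_mul]; ring)
    (fun c x y => by simp [smul_eq_mul]; ring)
    (fun x y y' => by simp [mul_add]; ring)
    (fun c x y => by simp [smul_eq_mul]; ring)

lemma mukaiForm_apply {M : Type} [AddCommGroup M] [Module ℤ M]
    (B : M →ₗ[ℤ] M →ₗ[ℤ] ℤ) (x y : ℤ × M × ℤ) :
    mukaiForm B x y = B x.2.1 y.2.1 - x.1 * y.2.2 - y.1 * x.2.2 := rfl

/-- A primitive vector in a unimodular lattice pairs to 1 with some vector. -/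
lemma prim_exists_one {M : Type} [AddCommGroup M] [Module ℤ M] [Module.Free ℤ M]
    [Module.Finite ℤ M]
    (B : M →ₗ[ℤ] M →ₗ[ℤ] ℤ) (hunimod : Function.Bijective B) (L : M)
    (hLprim : ∀ (n : ℤ) (c : M), L = n • c → IsUnit n) : ∃ y, B L y = 1 := by
  obtain ⟨a, hgen⟩ := (inferInstance :
    Submodule.IsPrincipal (LinearMap.range (B L) : Ideal ℤ))
  have hdvd : ∀ y, a ∣ B L y := by
    intro y
    have hmem : B L y ∈ (LinearMap.range (B L) : Ideal ℤ) := LinearMap.mem_range_self _ y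
    rw [hgen] at hmem
    exact (Ideal.mem_span_singleton).1 hmem
  by_cases haz : a = 0
  · exfalso
    have hφ0 : B L = (0 : M →ₗ[ℤ] ℤ) := by
      ext y
      have := hdvd y
      rw [haz, zero_dvd_iff] at this
      simpa using this
    have hL0 : L = 0 := by
      apply hunimod.1
      rw [hφ0, map_zero]
    have := hLprim 0 0 (by simp [hL0])
    simp at this
  · obtain ⟨ι, bb⟩ := (Module.Free.exists_basis (R := ℤ) (M := M)).some
    set ψ : M →ₗ[ℤ] ℤ := bb.constr ℤ (fun i => B L (bb i) / a) with hψ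
    have hφψ : B L = a • ψ := by
      apply bb.ext
      intro i
      simp only [hψ, Module.Basis.constr_basis, LinearMap.smul_apply, smul_eq_mul]
      exact (Int.mul_ediv_cancel' (hdvd (bb i))).symm
    obtain ⟨L', hL'⟩ := hunimod.2 ψ
    have hLa : L = a • L' := by
      apply hunimod.1
      rw [map_zsmul, hL', hφψ]
    have hau : IsUnit a := hLprim a L' hLa
    obtain ⟨y₀, hy₀⟩ : ∃ y₀, B L y₀ = a := by
      have : a ∈ (LinearMap.range (B L) : Ideal ℤ) := by
        rw [hgen]; exact Ideal.subset_span (by simp)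
      exact this
    refine ⟨a • y₀, ?_⟩
    rw [map_zsmul, hy₀, smul_eq_mul]
    rcases Int.isUnit_iff.1 hau with h | h <;> rw [h] <;> ring

theorem stabilizer_congruences
    (m : ℤ) (hm : 1 ≤ m)
    {M : Type} [AddCommGroup M] [Module ℤ M] [Module.Free ℤ M] [Module.Finite ℤ M]
    (B : M →ₗ[ℤ] M →ₗ[ℤ] ℤ) (hsymm : ∀ x y, B x y = B y x)
    (heven : ∀ c, Even (B c c)) (hunimod : Function.Bijective B)
    (g : (ℤ × M × ℤ) →ₗ[ℤ] (ℤ × M × ℤ)) (hg : Function.Bijective g)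
    (hiso : ∀ x y, mukaiForm B (g x) (g y) = mukaiForm B x y)
    (hgv : g ((1 : ℤ), (0 : M), -m) = ((1 : ℤ), (0 : M), -m))
    (r k : ℤ) (L : M) (hLprim : ∀ (n : ℤ) (c : M), L = n • c → IsUnit n)
    (hgw : g ((1 : ℤ), (0 : M), m) = ((r : ℤ), k • L, r * m)) :
    ∃ c ρ : ℤ, k = 2 * m * c ∧ r = 1 + 2 * m * ρ
      ∧ c ^ 2 * B L L = 2 * ρ + 2 * m * ρ ^ 2
      ∧ IsCoprime c r := by
  have hm0 : m ≠ 0 := by linarith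
  obtain ⟨y₀, hy₀⟩ := prim_exists_one B hunimod L hLprim
  set u : ℤ × M × ℤ := g ((0 : ℤ), (0 : M), (1 : ℤ)) with hu
  have hkey : (2 * m) • u = (r - 1, k • L, r * m + m) := by
    have h1 : ((1 : ℤ), (0 : M), m) - ((1 : ℤ), (0 : M), -m)
        = (2 * m) • ((0 : ℤ), (0 : M), (1 : ℤ)) := by
      refine Prod.ext ?_ (Prod.ext ?_ ?_)
      · simp
      · simp
        exact (zsmul_zero _).symm
      · show m - -m = (2 * m) • (1 : ℤ)
        rw [smul_eq_mul]; ring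
    have h2 : g (((1 : ℤ), (0 : M), m) - ((1 : ℤ), (0 : M), -m))
        = (2 * m) • u := by rw [h1, map_smul]
    rw [map_sub, hgw, hgv] at h2
    rw [← h2]
    refine Prod.ext ?_ (Prod.ext ?_ ?_)
    · simp
    · simp
    · show r * m - -m = r * m + m
      ring
  have hp : 2 * m * u.1 = r - 1 := by
    have := congrArg Prod.fst hkey; simpa [smul_eq_mul] using this
  have hx : (2 * m) • u.2.1 = k • L := by
    have := congrArg (fun z => z.2.1) hkey; simpa using this
  set ρ := u.1 with hρ
  have hr : r = 1 + 2 * m * ρ := by linarith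
  set c : ℤ := B u.2.1 y₀ with hc
  have hk : k = 2 * m * c := by
    have h := congrArg (fun z => B z y₀) hx
    simp [hy₀] at h
    rw [hc]; linarith
  have hww := hiso ((1 : ℤ), (0 : M), m) ((1 : ℤ), (0 : M), m)
  rw [hgw, mukaiForm_apply, mukaiForm_apply] at hww
  have hww2 : k * (k * B L L) - r * (r * m) - r * (r * m) = 0 - 1 * m - 1 * m := by
    simp at hww
    linear_combination hww
  have hquad : c ^ 2 * B L L = 2 * ρ + 2 * m * ρ ^ 2 := by
    have h4 : (4 * m ^ 2) * (c ^ 2 * B L L - (2 * ρ + 2 * m * ρ ^ 2)) = 0 := by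
      rw [hk, hr] at hww2
      linear_combination hww2
    rcases mul_eq_zero.1 h4 with h | h
    · exfalso; apply hm0; nlinarith
    · linarith
  have hco := hiso ((1 : ℤ), (0 : M), m) ((0 : ℤ), (0 : M), (-1 : ℤ))
  rw [hgw, mukaiForm_apply, mukaiForm_apply] at hco
  have hco2 : k * B L (g ((0:ℤ), (0:M), (-1:ℤ))).2.1 - r * (g ((0:ℤ), (0:M), (-1:ℤ))).2.2
      - (g ((0:ℤ), (0:M), (-1:ℤ))).1 * (r * m) = 0 - 1 * (-1) - 0 * m := by
    simp at hco
    linear_combination hco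
  have hcop : IsCoprime c r := by
    refine ⟨2 * m * B L (g ((0:ℤ), (0:M), (-1:ℤ))).2.1,
      -((g ((0:ℤ), (0:M), (-1:ℤ))).2.2 + (g ((0:ℤ), (0:M), (-1:ℤ))).1 * m), ?_⟩
    rw [hk] at hco2
    linear_combination hco2
  exact ⟨c, ρ, hk, hr, hquad, hcop⟩
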